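/- Let A be a finite nonempty type, X = (ℤ → A) with the product measurable structure (where A carries the discrete σ-algebra), and let T : X → X be the shift, (Tx)(n) = x(n+1), which is a measurable bijection with measurable inverse (T⁻¹x)(n) = x(n−1). Let μ be a probability measure on X and let ν be the measure on X × Bool given by the sum of the pushforwards of μ under x ↦ (x, true) and x ↦ (x, false). Define R : X × Bool → X × Bool by R(x, true) = (Tx, false) and R(x, false) = (T⁻¹x, true). If the pushforward of ν under R equals ν, then the pushforward of μ under T equals μ, i.e., μ is shift-invariant. (This is the content of Lemma 'inv' of the paper: a unimodular random labelling of the bi-infinite line is shift-invariant.) -/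

import Mathlib

open MeasureTheory

theorem shift_invariant_of_flag_reversal_invariant
    {A : Type*} [Fintype A] [Nonempty A]
    [MeasurableSpace A] [DiscreteMeasurableSpace A]
    (μ : Measure (ℤ → A)) [IsProbabilityMeasure μ]
    (T : (ℤ → A) → (ℤ → A)) (hT : ∀ x n, T x n = x (n + 1))
    (Tinv : (ℤ → A) → (ℤ → A)) (hTinv : ∀ x n, Tinv x n = x (n - 1))
    (R : (ℤ → A) × Bool → (ℤ → A) × Bool)
    (hRtrue : ∀ x, R (x, true) = (T x, false))
    (hRfalse : ∀ x, R (x, false) = (Tinv x, true))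
    (ν : Measure ((ℤ → A) × Bool))
    (hν : ν = μ.map (fun x => (x, true)) + μ.map (fun x => (x, false)))
    (hRinv : ν.map R = ν) :
    μ.map T = μ := by
  have hTm : Measurable T := by
    have : T = fun x n => x (n + 1) := by funext x n; exact hT x n
    rw [this]
    exact measurable_pi_lambda _ (fun n => measurable_pi_apply _)
  have hTinvm : Measurable Tinv := by
    have : Tinv = fun x n => x (n - 1) := by funext x n; exact hTinv x n
    rw [this]
    exact measurable_pi_lambda _ (fun n => measurable_pi_apply _)
  have hRm : Measurable R := by
    have hR : R = fun p => if p.2 = true then (T p.1, false) else (Tinv p.1, true) := by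
      funext p
      obtain ⟨x, b⟩ := p
      cases b
      · simpa using hRfalse x
      · simpa using hRtrue x
    rw [hR]
    have hset : MeasurableSet {p : (ℤ → A) × Bool | p.2 = true} :=
      measurable_snd (MeasurableSet.singleton true)
    exact Measurable.ite hset ((hTm.comp measurable_fst).prodMk measurable_const)
      ((hTinvm.comp measurable_fst).prodMk measurable_const)
  -- value of ν on rectangles
  have hνtrue : ∀ s : Set (ℤ → A), MeasurableSet s → ν (s ×ˢ ({true} : Set Bool)) = μ s := by
    intro s hs
    have hms : MeasurableSet (s ×ˢ ({true} : Set Bool)) :=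
      hs.prod (MeasurableSet.singleton true)
    rw [hν, Measure.add_apply,
      Measure.map_apply (show Measurable fun x : ℤ → A => (x, true) from
        measurable_id.prodMk measurable_const) hms,
      Measure.map_apply (show Measurable fun x : ℤ → A => (x, false) from
        measurable_id.prodMk measurable_const) hms]
    have h1 : (fun x : ℤ → A => (x, true)) ⁻¹' (s ×ˢ ({true} : Set Bool)) = s := by
      ext x; simp
    have h2 : (fun x : ℤ → A => (x, false)) ⁻¹' (s ×ˢ ({true} : Set Bool)) = ∅ := by
      ext x; simp
    rw [h1, h2]; simp
  have hνfalse : ∀ s : Set (ℤ → A), MeasurableSet s → ν (s ×ˢ ({false} : Set Bool)) = μ s := by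
    intro s hs
    have hms : MeasurableSet (s ×ˢ ({false} : Set Bool)) :=
      hs.prod (MeasurableSet.singleton false)
    rw [hν, Measure.add_apply,
      Measure.map_apply (show Measurable fun x : ℤ → A => (x, true) from
        measurable_id.prodMk measurable_const) hms,
      Measure.map_apply (show Measurable fun x : ℤ → A => (x, false) from
        measurable_id.prodMk measurable_const) hms]
    have h1 : (fun x : ℤ → A => (x, true)) ⁻¹' (s ×ˢ ({false} : Set Bool)) = ∅ := by
      ext x; simp
    have h2 : (fun x : ℤ → A => (x, false)) ⁻¹' (s ×ˢ ({false} : Set Bool)) = s := by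
      ext x; simp
    rw [h1, h2]; simp
  ext s hs
  rw [Measure.map_apply hTm hs]
  have key := congrArg (fun m : Measure ((ℤ → A) × Bool) =>
    m (s ×ˢ ({false} : Set Bool))) hRinv
  rw [Measure.map_apply hRm (hs.prod (MeasurableSet.singleton false))] at key
  have hpre : R ⁻¹' (s ×ˢ ({false} : Set Bool)) = (T ⁻¹' s) ×ˢ ({true} : Set Bool) := by
    ext ⟨x, b⟩
    cases b
    · simp [Set.mem_preimage, hRfalse x]
    · simp [Set.mem_preimage, hRtrue x]
  rw [hpre, hνtrue _ (hTm hs), hνfalse _ hs] at key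
  exact key
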